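/- Let λ be a measure on X and W a nonnegative measurable function with ∫ R f dλ = ∫ f · W dλ for every nonnegative measurable f : X → ℝ. Suppose h : X → ℝ is a nonnegative measurable function with R h = h. Then for every nonnegative measurable f : X → ℝ one has ∫ W · ((f ∘ σ))² · h dλ = ∫ f² · h dλ; that is, the operator V : f ↦ √W · (f ∘ σ) is an isometry of L²(λ.withDensity h). -/
import Mathlib


open MeasureTheory

/-- If `λR = λ.withDensity W` and `h ≥ 0` is harmonic (`R h = h`), then
`V : f ↦ √W · (f ∘ σ)` is an isometry of `L²(λ.withDensity h)`:
`∫ W · (f ∘ σ)² · h dλ = ∫ f² · h dλ` for all nonnegative measurable `f`. -/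
theorem stmt_9 {X : Type*} [MeasurableSpace X] (σ : X → X)
    (hσ : Measurable σ) (hσsurj : Function.Surjective σ)
    (R : (X → ℝ) → (X → ℝ))
    (hadd : ∀ f g : X → ℝ, R (f + g) = R f + R g)
    (hsmul : ∀ (c : ℝ) (f : X → ℝ), R (c • f) = c • R f)
    (hmeas : ∀ f : X → ℝ, Measurable f → Measurable (R f))
    (hpos : ∀ f : X → ℝ, 0 ≤ f → 0 ≤ R f)
    (hpull : ∀ f g : X → ℝ, Measurable f → Measurable g →
      R ((f ∘ σ) * g) = f * R g)
    (lam : Measure X)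
    (W : X → ℝ) (hW : Measurable W) (hW0 : 0 ≤ W)
    (hRW : ∀ f : X → ℝ, Measurable f → 0 ≤ f →
      ∫⁻ x, ENNReal.ofReal (R f x) ∂lam = ∫⁻ x, ENNReal.ofReal (f x * W x) ∂lam)
    (h : X → ℝ) (hh : Measurable h) (hh0 : 0 ≤ h) (hharm : R h = h) :
    ∀ f : X → ℝ, Measurable f → 0 ≤ f →
      ∫⁻ x, ENNReal.ofReal (W x * f (σ x) ^ 2 * h x) ∂lam =
        ∫⁻ x, ENNReal.ofReal (f x ^ 2 * h x) ∂lam := by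
  intro f hf hf0
  set g : X → ℝ := fun x => f (σ x) ^ 2 * h x with hg
  have hgeq : g = ((f ^ 2) ∘ σ) * h := by
    funext x; simp [hg, Function.comp]
  have hRg : R g = f ^ 2 * h := by
    rw [hgeq, hpull (f ^ 2) h (hf.pow_const 2) hh, hharm]
  have hgmeas : Measurable g := ((hf.comp hσ).pow_const 2).mul hh
  have hg0 : 0 ≤ g := fun x => mul_nonneg (sq_nonneg _) (hh0 x)
  have := hRW g hgmeas hg0
  rw [hRg] at this
  calc ∫⁻ x, ENNReal.ofReal (W x * f (σ x) ^ 2 * h x) ∂lam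
      = ∫⁻ x, ENNReal.ofReal (g x * W x) ∂lam := by
        refine lintegral_congr fun x => ?_
        congr 1; simp [hg]; ring
    _ = ∫⁻ x, ENNReal.ofReal (f x ^ 2 * h x) ∂lam := by
        rw [← this]; rfl
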